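/- For Re s > 1, n a nonzero integer, and y > 0: ∫_{−∞}^{∞} (1+x²)^{−s/2} e^{−2πi n y x} dx = 2 π^{s/2} Γ(s/2)^{−1} |ny|^{(s−1)/2} K_{(s−1)/2}(2π|n|y), where K_s(y) = (1/2)∫₀^∞ e^{−y(t+t^{-1})/2} t^s dt/t is the K-Bessel function. -/

import Mathlib

open Real MeasureTheory

open Complex Set

lemma cpow_pos_eq {p : ℝ} (hp : 0 < p) (w : ℂ) :
    (p : ℂ) ^ w = Complex.exp (Real.log p * w) := by
  rw [Complex.cpow_def_of_ne_zero (by exact_mod_cast hp.ne'), Complex.ofReal_log hp.le]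

lemma integrableOn_cpow_mul_exp_neg_mul {a : ℂ} (ha : 0 < a.re) {r : ℝ} (hr : 0 < r) :
    IntegrableOn (fun t : ℝ ↦ (t : ℂ) ^ (a - 1) * Complex.exp (-(r * t))) (Set.Ioi 0) := by
  have h2 : IntegrableOn
      (fun t : ℝ ↦ Complex.exp (-(r * t)) * ((r * t : ℝ) : ℂ) ^ (a - 1)) (Set.Ioi 0) := by
    have := (integrableOn_Ioi_comp_mul_left_iff
      (fun x : ℝ ↦ Complex.exp (-x) * (x : ℂ) ^ (a - 1)) 0 hr).mpr
      (by simpa using Complex.GammaIntegral_convergent ha)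
    simpa [Complex.ofReal_mul] using this
  have h3 := h2.const_mul (((r⁻¹ : ℝ) : ℂ) ^ (a - 1))
  refine h3.congr ((ae_restrict_iff' measurableSet_Ioi).mpr (ae_of_all _ fun t ht => ?_))
  rw [Set.mem_Ioi] at ht
  simp only [cpow_pos_eq (inv_pos.mpr hr), cpow_pos_eq (mul_pos hr ht), cpow_pos_eq ht,
    Real.log_inv, Real.log_mul hr.ne' ht.ne']
  rw [show Complex.exp (↑(-Real.log r) * (a - 1)) *
      (Complex.exp (-(↑r * ↑t)) * Complex.exp (↑(Real.log r + Real.log t) * (a - 1)))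
      = Complex.exp (↑(-Real.log r) * (a - 1) + (↑(Real.log r + Real.log t) * (a - 1)))
        * Complex.exp (-(↑r * ↑t)) by rw [Complex.exp_add]; ring]
  congr 2
  push_cast
  ring

/-- The K-Bessel (Macdonald) function `K_s(y) = (1/2)∫₀^∞ e^{-y(t+1/t)/2} t^{s-1} dt`. -/
noncomputable def KBessel (s : ℂ) (y : ℝ) : ℂ :=
  (1 / 2) * ∫ t in Set.Ioi (0 : ℝ), Complex.exp (-(y * (t + t⁻¹) / 2)) * (t : ℂ) ^ (s - 1)

set_option maxHeartbeats 1000000 in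
theorem stmt_16 (s : ℂ) (hs : 1 < s.re) (n : ℤ) (hn : n ≠ 0) (y : ℝ) (hy : 0 < y) :
    ∫ x : ℝ, ((1 + x ^ 2 : ℝ) : ℂ) ^ (-s / 2) *
        Complex.exp (-(2 * (π : ℂ) * Complex.I * (n : ℂ) * (y : ℂ) * (x : ℂ)))
      = 2 * (π : ℂ) ^ (s / 2) * (Complex.Gamma (s / 2))⁻¹ *
          ((|(n : ℝ) * y| : ℝ) : ℂ) ^ ((s - 1) / 2) *
          KBessel ((s - 1) / 2) (2 * π * |(n : ℝ)| * y) := by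
  set a : ℝ := (n : ℝ) * y with ha_def
  have ha : a ≠ 0 := mul_ne_zero (Int.cast_ne_zero.mpr hn) hy.ne'
  have haabs : 0 < |a| := abs_pos.mpr ha
  obtain ⟨c, hc_def, hc⟩ : ∃ c : ℝ, c = π * |a| ∧ 0 < c :=
    ⟨_, rfl, mul_pos pi_pos haabs⟩
  have hs2 : 0 < (s / 2).re := by
    rw [Complex.div_ofNat_re]; positivity
  have hΓ : Complex.Gamma (s / 2) ≠ 0 := Complex.Gamma_ne_zero_of_re_pos hs2
  set τ : ℂ := ((-(2 * π * a) : ℝ) : ℂ) with hτ_def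
  set F : ℝ → ℝ → ℂ := fun x u ↦ Complex.exp (Complex.I * τ * x) *
      ((u : ℂ) ^ (s / 2 - 1) * Complex.exp (-(((1 + x ^ 2 : ℝ) : ℂ) * (u : ℂ)))) with hF_def
  -- Step A : pointwise Gamma representation
  have stepA : ∀ x : ℝ, ((1 + x ^ 2 : ℝ) : ℂ) ^ (-s / 2) *
      Complex.exp (-(2 * (π : ℂ) * Complex.I * (n : ℂ) * (y : ℂ) * (x : ℂ)))
      = (Complex.Gamma (s / 2))⁻¹ * ∫ u in Ioi (0 : ℝ), F x u := by
    intro x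
    have hr : (0 : ℝ) < 1 + x ^ 2 := by positivity
    have key := integral_cpow_mul_exp_neg_mul_Ioi (a := s / 2) hs2 hr
    have hint : (∫ u in Ioi (0 : ℝ), F x u) = Complex.exp (Complex.I * τ * x) *
        ((1 / ((1 + x ^ 2 : ℝ) : ℂ)) ^ (s / 2) * Complex.Gamma (s / 2)) := by
      rw [hF_def]
      rw [integral_const_mul, key]
    rw [hint]
    have h1 : ((1 + x ^ 2 : ℝ) : ℂ) ^ (-s / 2) = (1 / ((1 + x ^ 2 : ℝ) : ℂ)) ^ (s / 2) := by
      rw [show (1 / ((1 + x ^ 2 : ℝ) : ℂ)) = (((1 + x ^ 2)⁻¹ : ℝ) : ℂ) by push_cast; ring,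
        cpow_pos_eq hr, cpow_pos_eq (inv_pos.mpr hr), Real.log_inv]
      congr 1
      push_cast
      ring
    have h2 : Complex.exp (-(2 * (π : ℂ) * Complex.I * n * y * x))
        = Complex.exp (Complex.I * τ * x) := by
      congr 1
      rw [hτ_def, ha_def]
      push_cast
      ring
    rw [h1, h2]
    field_simp
  -- Step B : Fubini integrability
  have hFint : Integrable (Function.uncurry F) (volume.prod (volume.restrict (Ioi 0))) := by
    have hσ : 0 < s.re / 2 := by linarith
    have hmeas : AEStronglyMeasurable (Function.uncurry F)
        (volume.prod (volume.restrict (Ioi 0))) := by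
      rw [show volume.prod (volume.restrict (Ioi (0 : ℝ)))
          = (volume.prod volume).restrict (univ ×ˢ Ioi 0) by
        rw [← Measure.prod_restrict, Measure.restrict_univ]]
      refine ContinuousOn.aestronglyMeasurable ?_ (MeasurableSet.univ.prod measurableSet_Ioi)
      apply ContinuousOn.mul
      · exact (Complex.continuous_exp.comp (by fun_prop)).continuousOn
      · apply ContinuousOn.mul
        · intro p hp
          have hco : ContinuousAt (fun q : ℝ × ℝ => ((q.2 : ℝ) : ℂ) ^ (s / 2 - 1)) p :=
            ContinuousAt.cpow ((Complex.continuous_ofReal.comp continuous_snd).continuousAt)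
              continuousAt_const (Complex.ofReal_mem_slitPlane.2 hp.2)
          exact hco.continuousWithinAt
        · exact (Complex.continuous_exp.comp (by fun_prop)).continuousOn
    rw [integrable_prod_iff hmeas]
    simp only [Function.uncurry_apply_pair]
    refine ⟨ae_of_all _ fun x => ?_, ?_⟩
    · exact ((integrableOn_cpow_mul_exp_neg_mul hs2
        (show (0 : ℝ) < 1 + x ^ 2 by positivity)).const_mul _)
    · have hnorm : ∀ x : ℝ, (∫ u in Ioi (0 : ℝ), ‖F x u‖)
          = (1 / (1 + x ^ 2)) ^ (s.re / 2) * Real.Gamma (s.re / 2) := by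
        intro x
        have hr : (0 : ℝ) < 1 + x ^ 2 := by positivity
        rw [← integral_rpow_mul_exp_neg_mul_Ioi hσ hr]
        refine setIntegral_congr_fun measurableSet_Ioi fun u hu => ?_
        rw [mem_Ioi] at hu
        simp only [hF_def]
        rw [norm_mul, norm_mul,
          Complex.norm_exp, Complex.norm_exp, Complex.norm_cpow_eq_rpow_re_of_pos hu]
        have e1 : (Complex.I * τ * (x : ℂ)).re = 0 := by
          rw [hτ_def]; simp
        have e2 : (-(((1 + x ^ 2 : ℝ) : ℂ) * (u : ℂ))).re = -((1 + x ^ 2) * u) := by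
          rw [← Complex.ofReal_mul, ← Complex.ofReal_neg, Complex.ofReal_re]
        have e3 : (s / 2 - 1).re = s.re / 2 - 1 := by
          simp [Complex.sub_re, Complex.div_ofNat_re]
        rw [e1, e2, e3, Real.exp_zero, one_mul]
      refine (Integrable.congr ?_ (ae_of_all _ fun x => (hnorm x).symm))
      have hbase := integrable_rpow_neg_one_add_norm_sq (E := ℝ) (μ := volume) (r := s.re)
        (by simpa using hs)
      refine (hbase.mul_const (Real.Gamma (s.re / 2))).congr (ae_of_all _ fun x => ?_)
      have hr : (0 : ℝ) < 1 + x ^ 2 := by positivity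
      simp only [Real.norm_eq_abs, _root_.sq_abs, one_div, Real.inv_rpow hr.le,
        ← Real.rpow_neg hr.le, neg_div]
  -- Step D : inner Gaussian integral
  set G : ℝ → ℂ := fun u ↦ (u : ℂ) ^ (s / 2 - 1) * Complex.exp (-(u : ℂ)) *
      (((π : ℂ) / (u : ℂ)) ^ (1 / 2 : ℂ) * Complex.exp (-τ ^ 2 / (4 * (u : ℂ)))) with hG_def
  have stepD : ∀ u ∈ Ioi (0 : ℝ), (∫ x : ℝ, F x u) = G u := by
    intro u hu
    rw [mem_Ioi] at hu
    have gauss := fourierIntegral_gaussian (b := (u : ℂ)) (by simpa using hu) τ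
    have split : ∀ x : ℝ, F x u = ((u : ℂ) ^ (s / 2 - 1) * Complex.exp (-(u : ℂ))) *
        (Complex.exp (Complex.I * τ * x) * Complex.exp (-(u : ℂ) * (x : ℂ) ^ 2)) := by
      intro x
      simp only [hF_def]
      rw [show (-(((1 + x ^ 2 : ℝ) : ℂ) * (u : ℂ)))
          = -(u : ℂ) + -(u : ℂ) * (x : ℂ) ^ 2 by push_cast; ring, Complex.exp_add]
      ring
    simp_rw [split]
    rw [integral_const_mul, gauss, hG_def]
  -- Step F : substituted integrand
  have stepF : ∀ t ∈ Ioi (0 : ℝ), G (c * t) =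
      ((π : ℂ) ^ (1 / 2 : ℂ) * (c : ℂ) ^ ((s - 3) / 2)) *
        (Complex.exp (-((2 * π * |(n : ℝ)| * y : ℝ) * ((t : ℂ) + ((t⁻¹ : ℝ) : ℂ)) / 2)) *
          (t : ℂ) ^ ((s - 1) / 2 - 1)) := by
    intro t ht
    rw [mem_Ioi] at ht
    have hct : 0 < c * t := mul_pos hc ht
    have hyc : (2 * π * |(n : ℝ)| * y : ℝ) = 2 * c := by
      rw [hc_def, ha_def, abs_mul, abs_of_pos hy]; ring
    have hca : (π : ℝ) ^ 2 * a ^ 2 = c ^ 2 := by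
      rw [← _root_.sq_abs a, hc_def, mul_pow]
    have hτsq : τ ^ 2 = 4 * (c : ℂ) ^ 2 := by
      rw [hτ_def, show ((-(2 * π * a) : ℝ) : ℂ) ^ 2 = ((4 * (π ^ 2 * a ^ 2) : ℝ) : ℂ) by
        push_cast; ring, hca]
      push_cast; ring
    simp only [hG_def]
    rw [show ((π : ℂ) / ((c * t : ℝ) : ℂ)) = (((π / (c * t) : ℝ)) : ℂ) by push_cast; ring]
    have ht' : (t : ℂ) ≠ 0 := Complex.ofReal_ne_zero.mpr ht.ne'
    have hc' : (c : ℂ) ≠ 0 := Complex.ofReal_ne_zero.mpr hc.ne'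
    have hquot : -τ ^ 2 / (4 * ((c * t : ℝ) : ℂ)) = -(c : ℂ) * ((t : ℂ))⁻¹ := by
      rw [hτsq]
      push_cast
      field_simp
    rw [cpow_pos_eq hct, cpow_pos_eq (div_pos pi_pos hct), cpow_pos_eq pi_pos, cpow_pos_eq hc,
      cpow_pos_eq ht, Real.log_mul hc.ne' ht.ne', Real.log_div Real.pi_ne_zero hct.ne',
      Real.log_mul hc.ne' ht.ne', hyc, hquot]
    simp only [← Complex.exp_add]
    congr 1
    push_cast
    ring
  -- assemble
  calc ∫ x : ℝ, ((1 + x ^ 2 : ℝ) : ℂ) ^ (-s / 2) *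
        Complex.exp (-(2 * (π : ℂ) * Complex.I * (n : ℂ) * (y : ℂ) * (x : ℂ)))
      = ∫ x : ℝ, (Complex.Gamma (s / 2))⁻¹ * ∫ u in Ioi (0 : ℝ), F x u := by
        simp_rw [stepA]
    _ = (Complex.Gamma (s / 2))⁻¹ * ∫ x : ℝ, ∫ u in Ioi (0 : ℝ), F x u :=
        integral_const_mul _ _
    _ = (Complex.Gamma (s / 2))⁻¹ * ∫ u in Ioi (0 : ℝ), ∫ x : ℝ, F x u := by
        rw [integral_integral_swap hFint]
    _ = (Complex.Gamma (s / 2))⁻¹ * ∫ u in Ioi (0 : ℝ), G u := by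
        rw [setIntegral_congr_fun measurableSet_Ioi stepD]
    _ = (Complex.Gamma (s / 2))⁻¹ * (c • ∫ t in Ioi (0 : ℝ), G (c * t)) := by
        rw [integral_comp_mul_left_Ioi G 0 hc, mul_zero, smul_smul,
          mul_inv_cancel₀ hc.ne', one_smul]
    _ = 2 * (π : ℂ) ^ (s / 2) * (Complex.Gamma (s / 2))⁻¹ *
          ((|(n : ℝ) * y| : ℝ) : ℂ) ^ ((s - 1) / 2) *
          KBessel ((s - 1) / 2) (2 * π * |(n : ℝ)| * y) := by
        rw [setIntegral_congr_fun measurableSet_Ioi stepF, integral_const_mul, KBessel]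
        have hlogc : Real.log c = Real.log π + Real.log |a| := by
          rw [hc_def, Real.log_mul Real.pi_ne_zero haabs.ne']
        have key : (c : ℂ) * ((π : ℂ) ^ (1 / 2 : ℂ) * (c : ℂ) ^ ((s - 3) / 2)) =
            (π : ℂ) ^ (s / 2) * ((|a| : ℝ) : ℂ) ^ ((s - 1) / 2) := by
          rw [cpow_pos_eq pi_pos, cpow_pos_eq hc, cpow_pos_eq pi_pos, cpow_pos_eq haabs,
            show ((c : ℝ) : ℂ) = Complex.exp (Real.log c) by
              rw [← Complex.ofReal_exp, Real.exp_log hc]]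
          simp only [← Complex.exp_add]
          congr 1
          rw [hlogc]
          push_cast
          ring
        set J := ∫ t in Ioi (0 : ℝ),
            Complex.exp (-((2 * π * |(n : ℝ)| * y : ℝ) * ((t : ℂ) + ((t⁻¹ : ℝ) : ℂ)) / 2)) *
              (t : ℂ) ^ ((s - 1) / 2 - 1) with hJ
        rw [real_smul]
        linear_combination ((Complex.Gamma (s / 2))⁻¹ * J) * key
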